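/- Let F = F(X) be a free group on a set X, let v and w be nontrivial cyclic words of F, and suppose there exists a proper free splitting A * B of F such that both v and w are elliptic to A * B. Then there exists an automorphism φ of F such that the pair (φ(v), φ(w)) is good, i.e., either the letters used by φ(v) and φ(w) together do not exhaust X, or φ(v) and φ(w) use disjoint sets of letters. -/

import Mathlib

open FreeGroup

/-- The length of a cyclic word (conjugacy class): the minimal word length of a representative. -/
noncomputable def cycLen {X : Type} [DecidableEq X] (c : ConjClasses (FreeGroup X)) : ℕ :=
  sInf {n | ∃ g : FreeGroup X, ConjClasses.mk g = c ∧ (FreeGroup.toWord g).length = n}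

/-- An element of a free group is cyclically reduced if its first letter is not
the inverse of its last letter. -/
def IsCycRed {X : Type} [DecidableEq X] (g : FreeGroup X) : Prop :=
  ∀ x : X × Bool, (FreeGroup.toWord g).head? = some x →
    (FreeGroup.toWord g).getLast? ≠ some (x.1, !x.2)

/-- The set `L(c)` of letters of `X` occurring (up to inversion) in the cyclic word `c`. -/
def usedLetters {X : Type} [DecidableEq X] (c : ConjClasses (FreeGroup X)) : Set X :=
  {x | ∃ g : FreeGroup X, ConjClasses.mk g = c ∧ IsCycRed g ∧ ∃ b : Bool, (x, b) ∈ FreeGroup.toWord g}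

/-- The action of an automorphism of the free group on cyclic words (conjugacy classes). -/
def actC {X : Type} (φ : FreeGroup X ≃* FreeGroup X) (c : ConjClasses (FreeGroup X)) :
    ConjClasses (FreeGroup X) :=
  ConjClasses.map (φ : FreeGroup X →* FreeGroup X) c

/-- `τ` is a Whitehead automorphism of the second kind with multiplier `a ∈ X ∪ X⁻¹`. -/
def IsWhiteheadMult {X : Type} (a : X × Bool) (τ : FreeGroup X ≃* FreeGroup X) : Prop :=
  ∀ x : X, τ (of x) ∈ ({of x, of x * FreeGroup.mk [a],
      (FreeGroup.mk [a])⁻¹ * of x, (FreeGroup.mk [a])⁻¹ * of x * FreeGroup.mk [a]} :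
      Set (FreeGroup X))

/-- `τ` is a relabeling automorphism: it permutes the set `X ∪ X⁻¹`. -/
def IsRelabeling {X : Type} (τ : FreeGroup X ≃* FreeGroup X) : Prop :=
  ∀ x : X, ∃ y : X × Bool, τ (of x) = FreeGroup.mk [y]

/-- Whitehead automorphisms. -/
def IsWhitehead {X : Type} (τ : FreeGroup X ≃* FreeGroup X) : Prop :=
  IsRelabeling τ ∨ ∃ a : X × Bool, IsWhiteheadMult a τ

open FreeGroup

/-- `(A, B)` is a free splitting of `F`: the natural map from the free product `A ∗ B`
to `F` is an isomorphism (internal free product). -/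
def IsFreeSplitting {F : Type} [Group F] (A B : Subgroup F) : Prop :=
  Function.Bijective (Monoid.Coprod.lift A.subtype B.subtype)

/-- `g` is elliptic to the splitting `A * B`: `g` lies in a conjugate of `A` or of `B`. -/
def Elliptic {F : Type} [Group F] (A B : Subgroup F) (g : F) : Prop :=
  ∃ y : F, y * g * y⁻¹ ∈ A ∨ y * g * y⁻¹ ∈ B

/-- A cyclic word (conjugacy class) is elliptic to `A * B` if some representative lies in
`A` or in `B`. -/
def EllipticC {F : Type} [Group F] (A B : Subgroup F) (c : ConjClasses F) : Prop :=
  ∃ g : F, ConjClasses.mk g = c ∧ (g ∈ A ∨ g ∈ B)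

/-- The pair of cyclic words `(v, w)` is frugal: together they do not use all letters of `X`. -/
def Frugal {X : Type} [DecidableEq X] (v w : ConjClasses (FreeGroup X)) : Prop :=
  usedLetters v ∪ usedLetters w ≠ Set.univ

/-- The pair `(v, w)` is disjoint: `v` and `w` share no letters. -/
def DisjPair {X : Type} [DecidableEq X] (v w : ConjClasses (FreeGroup X)) : Prop :=
  usedLetters v ∩ usedLetters w = ∅

/-- A pair is good if it is frugal or disjoint. -/
def GoodPair {X : Type} [DecidableEq X] (v w : ConjClasses (FreeGroup X)) : Prop :=
  Frugal v w ∨ DisjPair v w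

/-- `(v, w)` has minimal length in its orbit under `Aut(F)`. -/
def MinLenPair {X : Type} [DecidableEq X] (v w : ConjClasses (FreeGroup X)) : Prop :=
  ∀ φ : FreeGroup X ≃* FreeGroup X,
    cycLen v + cycLen w ≤ cycLen (actC φ v) + cycLen (actC φ w)


section GPAuxSection
open List
set_option linter.unusedSectionVars false
set_option linter.unnecessarySimpa false
set_option maxHeartbeats 1000000

namespace GPAux

lemma freeGroup_isEmpty_eq_one {Y : Type} [IsEmpty Y] (g : FreeGroup Y) : g = 1 := by
  classical
  rcases hw : g.toWord with _ | ⟨a, t⟩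
  · exact FreeGroup.toWord_eq_nil_iff.1 hw
  · exact (IsEmpty.false a.1).elim

lemma closure_range_isFreeGroup_of (G : Type) [Group G] [IsFreeGroup G] :
    Subgroup.closure (Set.range (IsFreeGroup.of : IsFreeGroup.Generators G → G)) = ⊤ := by
  have h1 : Set.range (IsFreeGroup.of : IsFreeGroup.Generators G → G)
      = ((IsFreeGroup.mulEquiv G : FreeGroup (IsFreeGroup.Generators G) ≃* G) :
          FreeGroup (IsFreeGroup.Generators G) →* G) '' Set.range FreeGroup.of := by
    rw [← Set.range_comp]
    rfl
  rw [h1, ← MonoidHom.map_closure, FreeGroup.closure_range_of,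
    Subgroup.map_top_of_surjective _ (IsFreeGroup.mulEquiv G).surjective]



variable {X : Type} [DecidableEq X]

def bases (L : List (X × Bool)) : Set X := {x | ∃ b, (x, b) ∈ L}

lemma mem_bases {x : X} {L : List (X × Bool)} : x ∈ bases L ↔ ∃ b, (x, b) ∈ L := Iff.rfl

lemma bases_sublist {L M : List (X × Bool)} (h : L <+ M) : bases L ⊆ bases M := by
  rintro x ⟨b, hb⟩; exact ⟨b, h.mem hb⟩

lemma bases_append (L M : List (X × Bool)) : bases (L ++ M) = bases L ∪ bases M := by
  ext x
  constructor
  · rintro ⟨b, hb⟩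
    rcases List.mem_append.1 hb with h | h
    · exact Or.inl ⟨b, h⟩
    · exact Or.inr ⟨b, h⟩
  · rintro (⟨b, hb⟩ | ⟨b, hb⟩)
    · exact ⟨b, List.mem_append.2 (Or.inl hb)⟩
    · exact ⟨b, List.mem_append.2 (Or.inr hb)⟩

lemma bases_mul (g h : FreeGroup X) :
    bases (g * h).toWord ⊆ bases g.toWord ∪ bases h.toWord := by
  intro x hx
  have := bases_sublist (toWord_mul_sublist g h) hx
  rw [bases_append] at this; exact this

lemma bases_invRev (L : List (X × Bool)) : bases (FreeGroup.invRev L) = bases L := by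
  have key : ∀ (L : List (X × Bool)) (x : X) (b : Bool),
      (x, b) ∈ FreeGroup.invRev L ↔ (x, !b) ∈ L := by
    intro L x b
    unfold FreeGroup.invRev
    rw [List.mem_reverse, List.mem_map]
    constructor
    · rintro ⟨⟨y, c⟩, hyc, h⟩
      obtain ⟨h1, h2⟩ := Prod.mk.injEq .. ▸ h
      subst h1
      have : c = !b := by rw [← h2, Bool.not_not]
      rwa [← this]
    · intro h
      exact ⟨(x, !b), h, by simp⟩
  ext x
  constructor
  · rintro ⟨b, hb⟩; exact ⟨!b, (key L x b).1 hb⟩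
  · rintro ⟨b, hb⟩; exact ⟨!b, (key L x (!b)).2 (by simpa using hb)⟩

lemma bases_inv (g : FreeGroup X) : bases g⁻¹.toWord = bases g.toWord := by
  rw [toWord_inv, bases_invRev]

/-- the no-cancellation relation -/
def NC (a b : X × Bool) : Prop := ¬(a.1 = b.1 ∧ a.2 = !b.2)

lemma reduce_eq_self_of_chain' : ∀ {L : List (X × Bool)}, List.Chain' NC L → reduce L = L := by
  intro L
  induction L with
  | nil => intro; rfl
  | cons a L ih =>
    intro h
    rw [reduce.cons, ih h.tail]
    cases L with
    | nil => rfl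
    | cons b M =>
      have hab : NC a b := (List.isChain_cons_cons.1 h).1
      simp only [NC] at hab
      simp [hab]

lemma chain'_of_reduce_eq_self {L : List (X × Bool)} (h : reduce L = L) : List.Chain' NC L := by
  by_contra hc
  -- extract a cancelling adjacent pair
  have : ∃ (l₁ l₂ : List (X × Bool)) (a b : X × Bool),
      L = l₁ ++ a :: b :: l₂ ∧ ¬ NC a b := by
    clear h
    induction L with
    | nil => exact absurd List.isChain_nil hc
    | cons a L ih =>
      cases L with
      | nil => exact absurd (List.isChain_singleton a) hc
      | cons b M =>
        unfold List.Chain' at hc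
        rw [List.isChain_cons_cons] at hc
        push_neg at hc
        by_cases hab : NC a b
        · obtain ⟨l₁, l₂, c, d, hL, hcd⟩ := ih (hc hab)
          exact ⟨a :: l₁, l₂, c, d, by rw [hL]; rfl, hcd⟩
        · exact ⟨[], M, a, b, rfl, hab⟩
  obtain ⟨l₁, l₂, ⟨x, c⟩, b, hL, hcd⟩ := this
  simp only [NC, not_not] at hcd
  obtain ⟨h1, h2⟩ := hcd
  have hb : b = (x, !c) := by
    ext
    · exact h1.symm
    · simp at h2 ⊢; simp [h2]
  rw [hb] at hL
  exact FreeGroup.reduce.not (L₂ := l₁) (L₃ := l₂) (h.trans hL)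

lemma chain'_toWord (g : FreeGroup X) : List.Chain' NC g.toWord :=
  chain'_of_reduce_eq_self (reduce_toWord g)

lemma toWord_mk_of_chain' {L : List (X × Bool)} (h : List.Chain' NC L) :
    (FreeGroup.mk L).toWord = L := by
  rw [toWord_mk, reduce_eq_self_of_chain' h]


lemma invRev_concat (q : List (X × Bool)) (a : X × Bool) :
    FreeGroup.invRev (q ++ [a]) = (a.1, !a.2) :: FreeGroup.invRev q := by
  unfold FreeGroup.invRev
  simp

lemma inv_mk_singleton (a : X × Bool) :
    (FreeGroup.mk [a])⁻¹ = FreeGroup.mk [(a.1, !a.2)] := by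
  rw [FreeGroup.inv_mk]; rfl

lemma chain'_invRev {L : List (X × Bool)} (h : List.Chain' NC L) :
    List.Chain' NC (FreeGroup.invRev L) := by
  apply chain'_of_reduce_eq_self
  rw [FreeGroup.reduce_invRev, reduce_eq_self_of_chain' h]

lemma NC_of_ne {u a : X × Bool} (h : u ≠ (a.1, !a.2)) : NC u a := by
  rintro ⟨h1, h2⟩
  exact h (Prod.ext h1 h2)

lemma ne_of_NC {u a : X × Bool} (h : NC u a) : u ≠ (a.1, !a.2) := by
  intro he
  exact h ⟨by rw [he], by rw [he]⟩

lemma bases_rotate (m : List (X × Bool)) (c : X × Bool) :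
    bases (m ++ [c]) = bases (c :: m) := by
  ext x
  constructor
  · rintro ⟨b, hb⟩
    rcases List.mem_append.1 hb with h | h
    · exact ⟨b, List.mem_cons_of_mem _ h⟩
    · refine ⟨b, ?_⟩
      rw [List.mem_singleton] at h
      rw [h]
      exact List.mem_cons_self
  · rintro ⟨b, hb⟩
    rcases List.mem_cons.1 hb with h | h
    · exact ⟨b, List.mem_append.2 (Or.inr (by rw [h]; exact List.mem_singleton_self _))⟩
    · exact ⟨b, List.mem_append.2 (Or.inl h)⟩

lemma bases_conj_aux (n : ℕ) : ∀ (h g : FreeGroup X), h.toWord.length = n → IsCycRed g →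
    bases g.toWord ⊆ bases (h * g * h⁻¹).toWord := by
  induction n using Nat.strong_induction_on with
  | _ n ih =>
  intro h g hn hg
  rcases List.eq_nil_or_concat h.toWord with hp | ⟨q, a, hp⟩
  · -- h = 1
    have h1 : h = 1 := FreeGroup.toWord_eq_nil_iff.1 hp
    subst h1; simpa using fun x hx => hx
  rw [List.concat_eq_append] at hp
  by_cases hw : g.toWord = []
  · intro x hx
    rw [hw] at hx
    exact absurd hx.choose_spec List.not_mem_nil
  obtain ⟨c, m, hwcm⟩ := List.exists_cons_of_ne_nil hw
  have hq_chain : List.Chain' NC q :=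
    (chain'_toWord h).infix ⟨[], [a], by rw [hp]; simp⟩
  have hq_toWord : (FreeGroup.mk q).toWord = q := toWord_mk_of_chain' hq_chain
  have hq_len : (FreeGroup.mk q).toWord.length < n := by
    rw [hq_toWord, ← hn, hp]; simp
  have hh : h = FreeGroup.mk q * FreeGroup.mk [a] := by
    rw [FreeGroup.mul_mk, ← hp, FreeGroup.mk_toWord]
  by_cases hc1 : a.1 = c.1 ∧ a.2 = !c.2
  · -- left junction cancels: c = (a.1, !a.2), rotate g
    have hca : FreeGroup.mk [c] = (FreeGroup.mk [a])⁻¹ := by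
      rw [inv_mk_singleton]
      congr 2
      ext
      · exact hc1.1.symm
      · rw [hc1.2, Bool.not_not]
    have hgsplit : g = FreeGroup.mk [c] * FreeGroup.mk m := by
      rw [FreeGroup.mul_mk, List.singleton_append, ← hwcm, FreeGroup.mk_toWord]
    set g' : FreeGroup X := FreeGroup.mk (m ++ [c]) with hg'
    have hchain' : List.Chain' NC (m ++ [c]) := by
      unfold List.Chain'
      rw [List.isChain_append]
      refine ⟨(chain'_toWord g).infix ⟨[c], [], by rw [hwcm]; simp⟩,
        List.isChain_singleton c, ?_⟩
      intro u hu y hy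
      simp only [List.head?_cons, Option.mem_some_iff] at hy
      subst hy
      rw [Option.mem_def] at hu
      apply NC_of_ne
      intro he
      apply hg c (by rw [hwcm]; rfl)
      have hgl : g.toWord.getLast? = some u := by
        rw [hwcm]
        rcases m with _ | ⟨u0, m0⟩
        · simp at hu
        · rw [List.getLast?_cons_cons, hu]
      rw [hgl, he]
    have htw' : g'.toWord = m ++ [c] := toWord_mk_of_chain' hchain'
    have hcyc' : IsCycRed g' := by
      intro x hx
      rw [htw'] at hx ⊢
      rw [List.getLast?_concat]
      rcases m with _ | ⟨u0, m0⟩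
      · rw [List.nil_append, List.head?_cons, Option.some_inj] at hx
        intro hcon
        rw [Option.some_inj, ← hx] at hcon
        have := congrArg Prod.snd hcon
        simp at this
      · rw [List.cons_append, List.head?_cons, Option.some_inj] at hx
        have hNCcu : NC c x := by
          have hch := chain'_toWord g
          rw [hwcm, hx] at hch
          exact (List.isChain_cons_cons.1 hch).1
        intro hcon
        rw [Option.some_inj] at hcon
        apply hNCcu
        constructor <;> simp [hcon]
    have hbases : bases g'.toWord = bases g.toWord := by
      rw [htw', hwcm, bases_rotate]
    have halg : h * g * h⁻¹ = FreeGroup.mk q * g' * (FreeGroup.mk q)⁻¹ := by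
      rw [hh, hgsplit, hca, hg', ← FreeGroup.mul_mk, hca]
      group
    rw [halg, ← hbases]
    exact ih _ hq_len (FreeGroup.mk q) g' rfl hcyc'
  · by_cases hc2 : g.toWord.getLast hw = a
    · -- right junction cancels
      obtain ⟨m', hwm⟩ : ∃ m', g.toWord = m' ++ [a] := by
        refine ⟨g.toWord.dropLast, ?_⟩
        conv_lhs => rw [← List.dropLast_concat_getLast hw]
        rw [hc2]
      have hgsplit : g = FreeGroup.mk m' * FreeGroup.mk [a] := by
        rw [FreeGroup.mul_mk, ← hwm, FreeGroup.mk_toWord]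
      set g' : FreeGroup X := FreeGroup.mk (a :: m') with hg'
      have hjun : ∀ u ∈ m'.getLast?, NC u a := by
        have hch := chain'_toWord g
        rw [hwm] at hch
        intro u hu
        exact (List.isChain_append.1 hch).2.2 u hu a rfl
      have hchain' : List.Chain' NC (a :: m') := by
        unfold List.Chain'
        rw [List.isChain_cons]
        refine ⟨?_, (chain'_toWord g).infix ⟨[], [a], by rw [hwm]; simp⟩⟩
        intro y hy
        rcases hm0 : m' with _ | ⟨u0, m0⟩
        · simp [hm0] at hy
        · rw [hm0, List.head?_cons, Option.mem_some_iff] at hy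
          have huc : u0 = c := by
            have h2 := hwm
            rw [hwcm, hm0, List.cons_append] at h2
            exact ((List.cons.injEq .. ▸ h2).1).symm
          rw [← hy, huc]
          exact hc1
      have htw' : g'.toWord = a :: m' := toWord_mk_of_chain' hchain'
      have hcyc' : IsCycRed g' := by
        intro x hx
        rw [htw'] at hx ⊢
        rw [List.head?_cons, Option.some_inj] at hx
        cases hgl : m'.getLast? with
        | none =>
          have hmnil : m' = [] := List.getLast?_eq_none_iff.1 hgl
          rw [hmnil]
          intro hcon
          rw [List.getLast?_singleton, Option.some_inj, ← hx] at hcon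
          have h2 := congrArg Prod.snd hcon
          simp at h2
        | some u =>
          have hNC : NC u a := hjun u hgl
          have hgl2 : (a :: m').getLast? = some u := by
            rcases List.eq_nil_or_concat m' with h0 | ⟨l, b, h0⟩
            · rw [h0] at hgl; simp at hgl
            · rw [List.concat_eq_append] at h0
              rw [h0, List.getLast?_concat] at hgl
              rw [h0, ← List.cons_append, List.getLast?_concat]
              exact hgl
          rw [hgl2]
          intro hcon
          rw [Option.some_inj] at hcon
          exact ne_of_NC hNC (by rw [hcon, ← hx])
      have hbases : bases g'.toWord = bases g.toWord := by
        rw [htw', hwm, bases_rotate]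
      have hg2 : g' = FreeGroup.mk [a] * FreeGroup.mk m' := by
        rw [hg', FreeGroup.mul_mk, List.singleton_append]
      have halg : h * g * h⁻¹ = FreeGroup.mk q * g' * (FreeGroup.mk q)⁻¹ := by
        rw [hh, hgsplit, hg2]
        group
      rw [halg, ← hbases]
      exact ih _ hq_len (FreeGroup.mk q) g' rfl hcyc'
    · -- no cancellation: the concatenation is already reduced
      have hNCac : NC a c := hc1
      have hNCwa : NC (g.toWord.getLast hw) (a.1, !a.2) := by
        apply NC_of_ne
        intro he
        apply hc2
        rw [he]
        simp
      have hhp : h = FreeGroup.mk (q ++ [a]) := by rw [← hp, FreeGroup.mk_toWord]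
      have halg : h * g * h⁻¹ =
          FreeGroup.mk ((q ++ [a]) ++ (g.toWord ++ FreeGroup.invRev (q ++ [a]))) := by
        conv_lhs => rw [← FreeGroup.mk_toWord (x := g)]
        rw [hhp, FreeGroup.inv_mk, FreeGroup.mul_mk, FreeGroup.mul_mk, List.append_assoc]
      have hchainh : List.Chain' NC (q ++ [a]) := hp ▸ chain'_toWord h
      have hchainL :
          List.Chain' NC ((q ++ [a]) ++ (g.toWord ++ FreeGroup.invRev (q ++ [a]))) := by
        unfold List.Chain'
        rw [List.isChain_append]
        refine ⟨hchainh, ?_, ?_⟩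
        · rw [List.isChain_append]
          refine ⟨chain'_toWord g, chain'_invRev hchainh, ?_⟩
          intro u hu y hy
          rw [invRev_concat, List.head?_cons, Option.mem_def, Option.some_inj] at hy
          rw [Option.mem_def, List.getLast?_eq_getLast hw, Option.some_inj] at hu
          rw [← hu, ← hy]
          exact hNCwa
        · intro u hu y hy
          rw [Option.mem_def, List.getLast?_concat, Option.some_inj] at hu
          have hhd : (g.toWord ++ FreeGroup.invRev (q ++ [a])).head? = some c := by
            rw [hwcm, List.cons_append, List.head?_cons]
          rw [Option.mem_def, hhd, Option.some_inj] at hy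
          rw [← hu, ← hy]
          exact hNCac
      have htwL : (h * g * h⁻¹).toWord =
          (q ++ [a]) ++ (g.toWord ++ FreeGroup.invRev (q ++ [a])) := by
        rw [halg, toWord_mk_of_chain' hchainL]
      intro x hx
      rw [htwL, bases_append, bases_append, bases_append]
      exact Set.mem_union_right _ (Set.mem_union_left _ hx)

lemma exists_cycred_aux (n : ℕ) : ∀ g0 : FreeGroup X, g0.toWord.length = n →
    ∃ g h : FreeGroup X, h * g * h⁻¹ = g0 ∧ IsCycRed g ∧
      bases g.toWord ⊆ bases g0.toWord := by
  induction n using Nat.strong_induction_on with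
  | _ n ih =>
  intro g0 hn
  by_cases hcyc : IsCycRed g0
  · exact ⟨g0, 1, by group, hcyc, subset_rfl⟩
  rw [IsCycRed] at hcyc
  push_neg at hcyc
  obtain ⟨x, hhead, hlast⟩ := hcyc
  obtain ⟨t, hwt⟩ : ∃ t, g0.toWord = x :: t := by
    rcases hw0 : g0.toWord with _ | ⟨x', t⟩
    · rw [hw0] at hhead; simp at hhead
    · rw [hw0, List.head?_cons, Option.some_inj] at hhead
      exact ⟨t, by rw [← hhead]⟩
  have htne : t ≠ [] := by
    intro ht
    rw [hwt, ht, List.getLast?_singleton, Option.some_inj] at hlast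
    have := congrArg Prod.snd hlast
    simp at this
  have htlast : t.getLast htne = (x.1, !x.2) := by
    have : g0.toWord.getLast? = t.getLast? := by
      rcases hm : t with _ | ⟨u0, m0⟩
      · exact absurd hm htne
      · rw [hwt, hm, List.getLast?_cons_cons]
    rw [this, List.getLast?_eq_getLast htne, Option.some_inj] at hlast
    exact hlast
  have htsplit : t = t.dropLast ++ [(x.1, !x.2)] := by
    conv_lhs => rw [← List.dropLast_concat_getLast htne]
    rw [htlast]
  set g1 : FreeGroup X := FreeGroup.mk t.dropLast with hg1
  have hchain1 : List.Chain' NC t.dropLast := by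
    refine (chain'_toWord g0).infix ⟨[x], [(x.1, !x.2)], ?_⟩
    rw [hwt]
    conv_rhs => rw [htsplit]
    simp
  have htw1 : g1.toWord = t.dropLast := toWord_mk_of_chain' hchain1
  have hlen1 : g1.toWord.length < n := by
    rw [htw1, ← hn, hwt]
    have : t.dropLast.length = t.length - 1 := List.length_dropLast
    rw [this]
    simp only [List.length_cons]
    have : 0 < t.length := List.length_pos_iff.2 htne
    omega
  have hg0split : FreeGroup.mk [x] * g1 * (FreeGroup.mk [x])⁻¹ = g0 := by
    rw [inv_mk_singleton, hg1, FreeGroup.mul_mk, FreeGroup.mul_mk]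
    conv_rhs => rw [← FreeGroup.mk_toWord (x := g0), hwt]
    congr 1
    conv_rhs => rw [htsplit]
    simp
  obtain ⟨g, h, hgh, hgcyc, hsub⟩ := ih _ hlen1 g1 rfl
  refine ⟨g, FreeGroup.mk [x] * h, ?_, hgcyc, ?_⟩
  · have : FreeGroup.mk [x] * h * g * (FreeGroup.mk [x] * h)⁻¹ =
        FreeGroup.mk [x] * (h * g * h⁻¹) * (FreeGroup.mk [x])⁻¹ := by group
    rw [this, hgh, hg0split]
  · refine hsub.trans ?_
    rw [htw1, hwt]
    exact bases_sublist ((List.dropLast_sublist t).trans (List.sublist_cons_self x t))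

lemma usedLetters_subset {c : ConjClasses (FreeGroup X)} {g0 : FreeGroup X}
    (h : ConjClasses.mk g0 = c) : usedLetters c ⊆ bases g0.toWord := by
  rintro x ⟨g, hgc, hgcyc, b, hb⟩
  have hconj : IsConj g g0 := ConjClasses.mk_eq_mk_iff_isConj.1 (hgc.trans h.symm)
  obtain ⟨u, hu⟩ := isConj_iff.1 hconj
  have := bases_conj_aux u.toWord.length u g rfl hgcyc
  rw [hu] at this
  exact this ⟨b, hb⟩

lemma bases_of_mem_closure {Y : Set X} {g : FreeGroup X}
    (hg : g ∈ Subgroup.closure (FreeGroup.of '' Y)) : bases g.toWord ⊆ Y := by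
  refine Subgroup.closure_induction ?_ ?_ ?_ ?_ hg
  · rintro _ ⟨y, hy, rfl⟩
    rintro x ⟨b, hb⟩
    rw [FreeGroup.toWord_of, List.mem_singleton] at hb
    have : x = y := congrArg Prod.fst hb
    rwa [this]
  · rintro x ⟨b, hb⟩
    rw [FreeGroup.toWord_one] at hb
    exact absurd hb List.not_mem_nil
  · intro a b _ _ ha hb
    exact (bases_mul a b).trans (Set.union_subset ha hb)
  · intro a _ ha
    rwa [bases_inv a]


lemma bases_finite (L : List (X × Bool)) : (bases L).Finite := by
  apply Set.Finite.subset (Set.Finite.image Prod.fst (List.finite_toSet L))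
  rintro x ⟨b, hb⟩
  exact ⟨(x, b), hb, rfl⟩

noncomputable section
theorem main_finite [Fintype X] (A B : Subgroup (FreeGroup X))
    (hbij : Function.Bijective (Monoid.Coprod.lift A.subtype B.subtype))
    (hA : A ≠ ⊤) (hB : B ≠ ⊤) :
    ∃ φ : FreeGroup X ≃* FreeGroup X, ∃ X₁ X₂ : Set X,
      X₁ ∩ X₂ = ∅ ∧ X₁.Nonempty ∧ X₂.Nonempty ∧
      (∀ a ∈ A, φ a ∈ Subgroup.closure (FreeGroup.of '' X₁)) ∧
      (∀ b ∈ B, φ b ∈ Subgroup.closure (FreeGroup.of '' X₂)) := by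
  classical
  set S := IsFreeGroup.Generators A
  set T := IsFreeGroup.Generators B
  set c : FreeGroup (S ⊕ T) →* Monoid.Coprod A B :=
    FreeGroup.lift (Sum.elim (fun s => Monoid.Coprod.inl (IsFreeGroup.of s))
      (fun t => Monoid.Coprod.inr (IsFreeGroup.of t))) with hc
  set d : Monoid.Coprod A B →* FreeGroup (S ⊕ T) :=
    Monoid.Coprod.lift (IsFreeGroup.lift (fun s => FreeGroup.of (Sum.inl s)))
      (IsFreeGroup.lift (fun t => FreeGroup.of (Sum.inr t))) with hd
  have hdc : ∀ z, d (c z) = z := by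
    intro z
    have : d.comp c = MonoidHom.id _ := by
      apply FreeGroup.ext_hom
      rintro (s | t) <;>
        simp [hc, hd, Monoid.Coprod.lift_apply_inl, Monoid.Coprod.lift_apply_inr,
          IsFreeGroup.lift_of]
    exact DFunLike.congr_fun this z
  have hcd : ∀ z, c (d z) = z := by
    intro z
    have : c.comp d = MonoidHom.id _ := by
      apply Monoid.Coprod.hom_ext
      · apply IsFreeGroup.ext_hom
        intro s
        simp [hc, hd, Monoid.Coprod.lift_apply_inl, IsFreeGroup.lift_of]
      · apply IsFreeGroup.ext_hom
        intro t
        simp [hc, hd, Monoid.Coprod.lift_apply_inr, IsFreeGroup.lift_of]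
    exact DFunLike.congr_fun this z
  have hcbij : Function.Bijective c :=
    ⟨Function.LeftInverse.injective hdc, Function.RightInverse.surjective hcd⟩
  set j0 : FreeGroup (S ⊕ T) →* FreeGroup X :=
    (Monoid.Coprod.lift A.subtype B.subtype).comp c with hj0
  have hj0bij : Function.Bijective j0 := hbij.comp hcbij
  set j : FreeGroup (S ⊕ T) ≃* FreeGroup X := MulEquiv.ofBijective j0 hj0bij with hj
  have hjapp : ∀ z, j z = j0 z := fun z => rfl
  -- counting: S ⊕ T is finite with the same cardinality as X
  have homequiv : ((S ⊕ T) → Multiplicative (ZMod 2)) ≃ (X → Multiplicative (ZMod 2)) := by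
    refine (FreeGroup.lift.trans ?_).trans FreeGroup.lift.symm
    exact {
      toFun := fun f => f.comp (j.symm : FreeGroup X →* FreeGroup (S ⊕ T))
      invFun := fun f => f.comp (j : FreeGroup (S ⊕ T) →* FreeGroup X)
      left_inv := by
        intro f
        ext z
        simp
      right_inv := by
        intro f
        ext z
        simp }
  have hfinST : Finite (S ⊕ T) := by
    by_contra hinf
    rw [not_finite_iff_infinite] at hinf
    have h1 : Function.Injective (fun (x : S ⊕ T) => fun y : S ⊕ T =>
        (if y = x then Multiplicative.ofAdd (1 : ZMod 2) else 1 : Multiplicative (ZMod 2))) := by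
      intro x y hxy
      by_contra hne
      have h2 := congrFun hxy x
      beta_reduce at h2
      rw [if_pos rfl, if_neg (fun h : x = y => hne h)] at h2
      have h3 := congrArg Multiplicative.toAdd h2
      simp at h3
    haveI : Infinite ((S ⊕ T) → Multiplicative (ZMod 2)) := Infinite.of_injective _ h1
    haveI : Infinite (X → Multiplicative (ZMod 2)) := Infinite.of_injective _ homequiv.injective
    exact not_finite (X → Multiplicative (ZMod 2))
  haveI := hfinST
  haveI : Fintype (S ⊕ T) := Fintype.ofFinite _
  have hcard : Fintype.card (S ⊕ T) = Fintype.card X := by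
    have h2 : Fintype.card (Multiplicative (ZMod 2)) ^ Fintype.card (S ⊕ T)
        = Fintype.card (Multiplicative (ZMod 2)) ^ Fintype.card X := by
      rw [← Fintype.card_fun, ← Fintype.card_fun]
      exact Fintype.card_congr homequiv
    have hM2 : Fintype.card (Multiplicative (ZMod 2)) = 2 := rfl
    rw [hM2] at h2
    exact Nat.pow_right_injective (le_refl 2) h2
  set e : (S ⊕ T) ≃ X := Fintype.equivOfCardEq hcard with he
  -- nontriviality of the two sides
  have hsup : A ⊔ B = ⊤ := by
    have h1 := Monoid.Coprod.range_lift A.subtype B.subtype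
    rw [Subgroup.range_subtype, Subgroup.range_subtype] at h1
    rw [← h1]
    exact MonoidHom.range_eq_top.2 hbij.surjective
  have hAbot : A ≠ ⊥ := by
    intro h
    apply hB
    rw [h, bot_sup_eq] at hsup
    exact hsup
  have hBbot : B ≠ ⊥ := by
    intro h
    apply hA
    rw [h, sup_bot_eq] at hsup
    exact hsup
  have hSne : Nonempty S := by
    by_contra hS
    haveI : IsEmpty S := not_nonempty_iff.1 hS
    apply hAbot
    rw [Subgroup.eq_bot_iff_forall]
    intro x hx
    have h1 : (⟨x, hx⟩ : A) = 1 := by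
      have := freeGroup_isEmpty_eq_one ((IsFreeGroup.toFreeGroup (G := A)) ⟨x, hx⟩)
      have h2 := congrArg (IsFreeGroup.toFreeGroup (G := A)).symm this
      simpa using h2
    exact congrArg Subtype.val h1
  have hTne : Nonempty T := by
    by_contra hT
    haveI : IsEmpty T := not_nonempty_iff.1 hT
    apply hBbot
    rw [Subgroup.eq_bot_iff_forall]
    intro x hx
    have h1 : (⟨x, hx⟩ : B) = 1 := by
      have := freeGroup_isEmpty_eq_one ((IsFreeGroup.toFreeGroup (G := B)) ⟨x, hx⟩)
      have h2 := congrArg (IsFreeGroup.toFreeGroup (G := B)).symm this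
      simpa using h2
    exact congrArg Subtype.val h1
  -- the images of the generators
  have hj0inl : ∀ s : S, j0 (FreeGroup.of (Sum.inl s)) = ((IsFreeGroup.of s : A) : FreeGroup X) := by
    intro s
    simp [hj0, hc, Monoid.Coprod.lift_apply_inl]
  have hj0inr : ∀ t : T, j0 (FreeGroup.of (Sum.inr t)) = ((IsFreeGroup.of t : B) : FreeGroup X) := by
    intro t
    simp [hj0, hc, Monoid.Coprod.lift_apply_inr]
  -- closure computations
  have hmapA : Subgroup.map j0
      (Subgroup.closure (Set.range (fun s : S => FreeGroup.of (Sum.inl s)))) = A := by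
    rw [MonoidHom.map_closure]
    have himg : j0 '' Set.range (fun s : S => FreeGroup.of (Sum.inl s))
        = A.subtype '' Set.range (IsFreeGroup.of : S → A) := by
      rw [← Set.range_comp, ← Set.range_comp]
      exact Set.range_eq_iff _ _ |>.2 ⟨fun s => by simp [hj0inl s], fun y ⟨s, hs⟩ => ⟨s, by simp [← hs, hj0inl s]⟩⟩
    rw [himg, ← MonoidHom.map_closure, closure_range_isFreeGroup_of,
      ← MonoidHom.range_eq_map, Subgroup.range_subtype]
  have hmapB : Subgroup.map j0
      (Subgroup.closure (Set.range (fun t : T => FreeGroup.of (Sum.inr t)))) = B := by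
    rw [MonoidHom.map_closure]
    have himg : j0 '' Set.range (fun t : T => FreeGroup.of (Sum.inr t))
        = B.subtype '' Set.range (IsFreeGroup.of : T → B) := by
      rw [← Set.range_comp, ← Set.range_comp]
      exact Set.range_eq_iff _ _ |>.2 ⟨fun t => by simp [hj0inr t], fun y ⟨t, ht⟩ => ⟨t, by simp [← ht, hj0inr t]⟩⟩
    rw [himg, ← MonoidHom.map_closure, closure_range_isFreeGroup_of,
      ← MonoidHom.range_eq_map, Subgroup.range_subtype]
  -- now define φ
  refine ⟨j.symm.trans (FreeGroup.freeGroupCongr e), e '' (Set.range Sum.inl),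
    e '' (Set.range Sum.inr), ?_, ?_, ?_, ?_, ?_⟩
  · rw [← Set.image_inter e.injective]
    have h0 : Set.range (Sum.inl : S → S ⊕ T) ∩ Set.range Sum.inr = ∅ := by
      ext z
      simp only [Set.mem_inter_iff, Set.mem_range, Set.mem_empty_iff_false, iff_false]
      rintro ⟨⟨s, rfl⟩, ⟨t, ht⟩⟩
      exact Sum.inl_ne_inr ht.symm
    rw [h0, Set.image_empty]
  · obtain ⟨s⟩ := hSne
    exact ⟨e (Sum.inl s), Set.mem_image_of_mem _ ⟨s, rfl⟩⟩
  · obtain ⟨t⟩ := hTne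
    exact ⟨e (Sum.inr t), Set.mem_image_of_mem _ ⟨t, rfl⟩⟩
  · intro a ha
    rw [← hmapA] at ha
    obtain ⟨z, hz, hza⟩ := ha
    have hsymm : j.symm a = z := by
      apply j.injective
      rw [MulEquiv.apply_symm_apply, hjapp, hza]
    show (FreeGroup.freeGroupCongr e) (j.symm a) ∈ _
    rw [hsymm]
    have hmem : (FreeGroup.freeGroupCongr e) z ∈ Subgroup.map
        ((FreeGroup.freeGroupCongr e) : FreeGroup (S ⊕ T) →* FreeGroup X)
        (Subgroup.closure (Set.range (fun s : S => FreeGroup.of (Sum.inl s)))) :=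
      Subgroup.mem_map_of_mem _ hz
    rw [MonoidHom.map_closure] at hmem
    refine Subgroup.closure_mono ?_ hmem
    rintro _ ⟨_, ⟨s, rfl⟩, rfl⟩
    have hco : ((FreeGroup.freeGroupCongr e) : FreeGroup (S ⊕ T) →* FreeGroup X)
        (FreeGroup.of (Sum.inl s)) = FreeGroup.of (e (Sum.inl s)) := by
      simp [FreeGroup.freeGroupCongr_apply, FreeGroup.map.of]
    rw [hco]
    exact Set.mem_image_of_mem _ (Set.mem_image_of_mem _ ⟨s, rfl⟩)
  · intro b hb
    rw [← hmapB] at hb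
    obtain ⟨z, hz, hzb⟩ := hb
    have hsymm : j.symm b = z := by
      apply j.injective
      rw [MulEquiv.apply_symm_apply, hjapp, hzb]
    show (FreeGroup.freeGroupCongr e) (j.symm b) ∈ _
    rw [hsymm]
    have hmem : (FreeGroup.freeGroupCongr e) z ∈ Subgroup.map
        ((FreeGroup.freeGroupCongr e) : FreeGroup (S ⊕ T) →* FreeGroup X)
        (Subgroup.closure (Set.range (fun t : T => FreeGroup.of (Sum.inr t)))) :=
      Subgroup.mem_map_of_mem _ hz
    rw [MonoidHom.map_closure] at hmem
    refine Subgroup.closure_mono ?_ hmem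
    rintro _ ⟨_, ⟨t, rfl⟩, rfl⟩
    have hco : ((FreeGroup.freeGroupCongr e) : FreeGroup (S ⊕ T) →* FreeGroup X)
        (FreeGroup.of (Sum.inr t)) = FreeGroup.of (e (Sum.inr t)) := by
      simp [FreeGroup.freeGroupCongr_apply, FreeGroup.map.of]
    rw [hco]
    exact Set.mem_image_of_mem _ (Set.mem_image_of_mem _ ⟨t, rfl⟩)

end
end GPAux
end GPAuxSection

/-- If both nontrivial cyclic words `v` and `w` are elliptic to some proper
free splitting `A * B` of `F(X)`, then some automorphism carries `(v, w)` to a good pair. -/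
theorem good_pair_of_splitting {X : Type} [DecidableEq X]
    (v w : ConjClasses (FreeGroup X))
    (hv : v ≠ ConjClasses.mk 1) (hw : w ≠ ConjClasses.mk 1)
    (hsplit : ∃ A B : Subgroup (FreeGroup X), IsFreeSplitting A B ∧ A ≠ ⊤ ∧ B ≠ ⊤ ∧
      EllipticC A B v ∧ EllipticC A B w) :
    ∃ φ : FreeGroup X ≃* FreeGroup X, GoodPair (actC φ v) (actC φ w) := by
  classical
  obtain ⟨A, B, hsp, hA, hB, hv, hw2⟩ := hsplit
  obtain ⟨gv, hgv, hgvm⟩ := hv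
  obtain ⟨gw, hgw, hgwm⟩ := hw2
  by_cases hfin : Finite X
  · haveI := hfin
    haveI : Fintype X := Fintype.ofFinite X
    obtain ⟨φ, X₁, X₂, hdisj, hX1, hX2, hmA, hmB⟩ := GPAux.main_finite A B hsp hA hB
    refine ⟨φ, ?_⟩
    have hv' : actC φ v = ConjClasses.mk (φ gv) := by rw [← hgv]; rfl
    have hw' : actC φ w = ConjClasses.mk (φ gw) := by rw [← hgw]; rfl
    have keyv : ∀ Y : Set X, φ gv ∈ Subgroup.closure (FreeGroup.of '' Y) →
        usedLetters (actC φ v) ⊆ Y := by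
      intro Y hY
      rw [hv']
      exact (GPAux.usedLetters_subset rfl).trans (GPAux.bases_of_mem_closure hY)
    have keyw : ∀ Y : Set X, φ gw ∈ Subgroup.closure (FreeGroup.of '' Y) →
        usedLetters (actC φ w) ⊆ Y := by
      intro Y hY
      rw [hw']
      exact (GPAux.usedLetters_subset rfl).trans (GPAux.bases_of_mem_closure hY)
    have hdisj' : ∀ x, x ∈ X₁ → x ∈ X₂ → False := by
      intro x h1 h2
      have hx : x ∈ X₁ ∩ X₂ := ⟨h1, h2⟩
      rw [hdisj] at hx
      exact hx
    rcases hgvm with hva | hvb <;> rcases hgwm with hwa | hwb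
    · refine Or.inl ?_
      obtain ⟨x, hx⟩ := hX2
      intro huniv
      have hx1 : x ∈ usedLetters (actC φ v) ∪ usedLetters (actC φ w) := by
        rw [huniv]; trivial
      rcases hx1 with hxx | hxx
      · exact hdisj' x (keyv X₁ (hmA gv hva) hxx) hx
      · exact hdisj' x (keyw X₁ (hmA gw hwa) hxx) hx
    · refine Or.inr ?_
      rw [DisjPair, Set.eq_empty_iff_forall_notMem]
      rintro x ⟨h1, h2⟩
      exact hdisj' x (keyv X₁ (hmA gv hva) h1) (keyw X₂ (hmB gw hwb) h2)
    · refine Or.inr ?_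
      rw [DisjPair, Set.eq_empty_iff_forall_notMem]
      rintro x ⟨h1, h2⟩
      exact hdisj' x (keyw X₁ (hmA gw hwa) h2) (keyv X₂ (hmB gv hvb) h1)
    · refine Or.inl ?_
      obtain ⟨x, hx⟩ := hX1
      intro huniv
      have hx1 : x ∈ usedLetters (actC φ v) ∪ usedLetters (actC φ w) := by
        rw [huniv]; trivial
      rcases hx1 with hxx | hxx
      · exact hdisj' x hx (keyv X₂ (hmB gv hvb) hxx)
      · exact hdisj' x hx (keyw X₂ (hmB gw hwb) hxx)
  · refine ⟨MulEquiv.refl _, Or.inl ?_⟩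
    haveI : Infinite X := not_finite_iff_infinite.1 hfin
    have hv' : actC (MulEquiv.refl _) v = ConjClasses.mk gv := by rw [← hgv]; rfl
    have hw' : actC (MulEquiv.refl _) w = ConjClasses.mk gw := by rw [← hgw]; rfl
    have s1 : usedLetters (actC (MulEquiv.refl _) v) ⊆ GPAux.bases gv.toWord := by
      rw [hv']; exact GPAux.usedLetters_subset rfl
    have s2 : usedLetters (actC (MulEquiv.refl _) w) ⊆ GPAux.bases gw.toWord := by
      rw [hw']; exact GPAux.usedLetters_subset rfl
    intro huniv
    have hfu : (Set.univ : Set X).Finite := by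
      rw [← huniv]
      exact ((GPAux.bases_finite gv.toWord).union (GPAux.bases_finite gw.toWord)).subset
        (Set.union_subset_union s1 s2)
    exact Set.infinite_univ hfu
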